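/- For a complex-valued Lipschitz function u on an open set U ⊆ ℝⁿ and a real 1-form a with C¹ components, the function |u| is Lipschitz and satisfies |∇|u|(x)| ≤ |∇u(x) + i u(x) a(x)| for almost every x ∈ U (the diamagnetic inequality). -/

import Mathlib

open MeasureTheory Metric Filter

noncomputable section

/-- Euclidean space ℝⁿ. -/
abbrev En (n : ℕ) := EuclideanSpace ℝ (Fin n)

/-- Partial derivative ∂f/∂xʲ of a complex-valued function. -/
def pd {n : ℕ} (f : En n → ℂ) (j : Fin n) (x : En n) : ℂ :=
  fderiv ℝ f x (EuclideanSpace.single j 1)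

/-- Partial derivative ∂f/∂xʲ of a real-valued function. -/
def pdR {n : ℕ} (f : En n → ℝ) (j : Fin n) (x : En n) : ℝ :=
  fderiv ℝ f x (EuclideanSpace.single j 1)

/-- The magnetic momentum operator P_j = (1/i)∂_j + a_j applied to u. -/
def magP {n : ℕ} (a : Fin n → En n → ℝ) (j : Fin n) (u : En n → ℂ) (x : En n) : ℂ :=
  -Complex.I * pd u j x + (a j x : ℂ) * u x

/-- Components of the magnetic field B = da, B_{jk} = ∂a_k/∂x^j − ∂a_j/∂x^k. -/
def Bfield {n : ℕ} (a : Fin n → En n → ℝ) (j k : Fin n) (x : En n) : ℝ :=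
  pdR (a k) j x - pdR (a j) k x

lemma norm_clm_euclidean {n : ℕ} (ℓ : En n →L[ℝ] ℝ) :
    ‖ℓ‖ = Real.sqrt (∑ j, (ℓ (EuclideanSpace.single j 1))^2) := by
  set g : En n := (WithLp.equiv 2 (Fin n → ℝ)).symm (fun j => ℓ (EuclideanSpace.single j 1))
    with hg
  have hgj : ∀ j, g j = ℓ (EuclideanSpace.single j 1) := fun j => rfl
  have key : ℓ = innerSL ℝ g := by
    ext v
    have hv : v = ∑ j, v j • (EuclideanSpace.single j (1:ℝ) : En n) := by
      have := (EuclideanSpace.basisFun (Fin n) ℝ).sum_repr v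
      simpa [EuclideanSpace.basisFun_apply, EuclideanSpace.basisFun_repr] using this.symm
    conv_lhs => rw [hv]
    rw [map_sum]
    simp only [_root_.map_smul, smul_eq_mul]
    rw [innerSL_apply_apply, PiLp.inner_apply]
    simp [hgj, RCLike.inner_apply, mul_comm]
  have hn : ‖ℓ‖ = ‖g‖ := by rw [key, innerSL_apply_norm]
  rw [hn, EuclideanSpace.norm_eq]
  congr 1
  apply Finset.sum_congr rfl
  intro j _
  rw [Real.norm_eq_abs, sq_abs, hgj]

/-- diamagnetic inequality: for a locally Lipschitz complex function `u` on an
open set `U ⊆ ℝⁿ` and a real magnetic potential `a` with C¹ components, `|u|` is locally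
Lipschitz on `U` and `|∇|u|(x)| ≤ |∇u(x) + i u(x) a(x)|` for a.e. `x ∈ U`. -/
theorem stmt0 {n : ℕ} (U : Set (En n)) (hU : IsOpen U)
    (u : En n → ℂ) (a : Fin n → En n → ℝ)
    (ha : ∀ j, ContDiff ℝ 1 (a j))
    (hu : ∀ x ∈ U, ∃ (K : NNReal) (t : Set (En n)), t ∈ nhds x ∧ LipschitzOnWith K u t) :
    (∀ x ∈ U, ∃ (K : NNReal) (t : Set (En n)), t ∈ nhds x ∧
        LipschitzOnWith K (fun y => ‖u y‖) t) ∧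
    (∀ᵐ x ∂(volume.restrict U),
      ‖fderiv ℝ (fun y => ‖u y‖) x‖ ≤
        Real.sqrt (∑ j, ‖pd u j x + Complex.I * u x * (a j x : ℂ)‖ ^ 2)) := by
  constructor
  · intro x hx
    obtain ⟨K, t, ht, hK⟩ := hu x hx
    exact ⟨1 * K, t, ht, lipschitzWith_one_norm.comp_lipschitzOnWith hK⟩
  · rw [ae_restrict_iff' hU.measurableSet]
    have hnull : volume {x : En n | x ∈ U ∧ ¬ DifferentiableAt ℝ u x} = 0 := by
      apply measure_null_of_locally_null
      intro x hx
      obtain ⟨K, t, ht, hK⟩ := hu x hx.1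
      set V := interior t ∩ U with hVdef
      have hVo : IsOpen V := isOpen_interior.inter hU
      have hxV : x ∈ V := ⟨mem_interior_iff_mem_nhds.2 ht, hx.1⟩
      have hKV : LipschitzOnWith K u V :=
        hK.mono (Set.inter_subset_left.trans interior_subset)
      have hae := hKV.ae_differentiableWithinAt_of_mem (μ := volume)
      refine ⟨{x : En n | x ∈ U ∧ ¬ DifferentiableAt ℝ u x} ∩ V,
        inter_mem_nhdsWithin _ (hVo.mem_nhds hxV), measure_mono_null ?_ (ae_iff.1 hae)⟩
      rintro y ⟨⟨-, hyd⟩, hyV⟩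
      simp only [Set.mem_setOf_eq, Classical.not_imp]
      exact ⟨hyV, fun h => hyd (h.differentiableAt (hVo.mem_nhds hyV))⟩
    have hae0 : ∀ᵐ x ∂(volume : Measure (En n)),
        ¬ (x ∈ U ∧ ¬ DifferentiableAt ℝ u x) := by
      rw [ae_iff]
      simpa using hnull
    filter_upwards [hae0] with x hx hxU
    have hdiff : DifferentiableAt ℝ u x := by
      by_contra h
      exact hx ⟨hxU, h⟩
    by_cases h0 : u x = 0
    · have hz : fderiv ℝ (fun y => ‖u y‖) x = 0 := by
        apply IsLocalMin.fderiv_eq_zero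
        exact Filter.Eventually.of_forall fun y => by simp [h0]
      rw [hz]
      simpa using Real.sqrt_nonneg (∑ j, ‖pd u j x + Complex.I * u x * (a j x : ℂ)‖ ^ 2)
    · set Du := fderiv ℝ u x with hDu
      have h1 : HasFDerivAt u Du x := hdiff.hasFDerivAt
      have h2 : HasFDerivAt (fun y => ‖u y‖ ^ 2) (2 • (innerSL ℝ (u x)).comp Du) x := h1.norm_sq
      have hne : ‖u x‖ ^ 2 ≠ 0 := pow_ne_zero 2 (norm_ne_zero_iff.2 h0)
      have h3 := h2.sqrt hne
      simp only [Real.sqrt_sq, norm_nonneg] at h3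
      rw [h3.fderiv, norm_clm_euclidean]
      apply Real.sqrt_le_sqrt
      apply Finset.sum_le_sum
      intro j _
      have hw : (0:ℝ) < ‖u x‖ := norm_pos_iff.2 h0
      set z := Du (EuclideanSpace.single j 1) with hz
      have hpd : pd u j x = z := rfl
      rw [hpd]
      set w := u x with hwdef
      set c := a j x with hcdef
      have happ : ((1 / (2 * ‖w‖)) • (2 • (innerSL ℝ w).comp Du)) (EuclideanSpace.single j 1)
          = ((starRingEnd ℂ) w * z).re / ‖w‖ := by
        simp only [ContinuousLinearMap.smul_apply, ContinuousLinearMap.coe_smul',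
          Pi.smul_apply, ContinuousLinearMap.comp_apply, innerSL_apply_apply, Complex.inner,
          smul_eq_mul, two_smul, ContinuousLinearMap.add_apply, ← hz]
        field_simp
        ring
      rw [happ]
      have h6 : ((starRingEnd ℂ) w * (Complex.I * w * (c:ℂ))).re = 0 := by
        simp [Complex.mul_re, Complex.mul_im]
        ring
      have h5 : ((starRingEnd ℂ) w * z).re
          = ((starRingEnd ℂ) w * (z + Complex.I * w * (c:ℂ))).re := by
        rw [mul_add, Complex.add_re, h6, add_zero]
      have habs : |((starRingEnd ℂ) w * z).re / ‖w‖| ≤ ‖z + Complex.I * w * (c:ℂ)‖ := by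
        rw [abs_div, abs_of_pos hw, div_le_iff₀ hw]
        calc |((starRingEnd ℂ) w * z).re|
            = |((starRingEnd ℂ) w * (z + Complex.I * w * (c:ℂ))).re| := by rw [h5]
          _ ≤ ‖(starRingEnd ℂ) w * (z + Complex.I * w * (c:ℂ))‖ := Complex.abs_re_le_norm _
          _ = ‖w‖ * ‖z + Complex.I * w * (c:ℂ)‖ := by
              rw [norm_mul, RCLike.norm_conj]
          _ = ‖z + Complex.I * w * (c:ℂ)‖ * ‖w‖ := by ring
      calc (((starRingEnd ℂ) w * z).re / ‖w‖) ^ 2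
          = |((starRingEnd ℂ) w * z).re / ‖w‖| ^ 2 := (sq_abs _).symm
        _ ≤ ‖z + Complex.I * w * (c:ℂ)‖ ^ 2 := by
            apply pow_le_pow_left₀ (abs_nonneg _) habs
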